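/- Let Y be a compact metrizable space, B a countable Boolean subalgebra of the regular open algebra Reg(Y) containing a basis for the topology of Y, and let π : St(B) → Y be the map sending an ultrafilter p to the unique y ∈ Y such that every A ∈ B with y ∈ A belongs to p. Then the set {y ∈ Y : |π⁻¹({y})| = 1} equals ⋂_{A ∈ B} (A ∪ (Y \ cl(A))), and in particular is a dense G_δ subset of Y. -/

import Mathlib

open Set Filter

/-- An ultrafilter on a Boolean subalgebra `B` of the regular open algebra of `Y`
(where the meet is intersection and the complement of `A` is `(closure A)ᶜ`). -/
def IsUltrafilterOn {Y : Type*} [TopologicalSpace Y] (B p : Set (Set Y)) : Prop :=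
  p ⊆ B ∧ Set.univ ∈ p ∧ ∅ ∉ p ∧
  (∀ a ∈ p, ∀ b ∈ B, a ⊆ b → b ∈ p) ∧
  (∀ a ∈ p, ∀ b ∈ p, a ∩ b ∈ p) ∧
  (∀ A ∈ B, A ∈ p ∨ (closure A)ᶜ ∈ p)

/-- The set of `y ∈ Y` having a unique `π`-preimage in the Stone space `St(B)`:
`π(p) = y` iff every `A ∈ B` containing `y` lies in `p`. -/
def UniquePreimageSet {Y : Type*} [TopologicalSpace Y] (B : Set (Set Y)) : Set Y :=
  {y : Y | ∃! p : Set (Set Y), IsUltrafilterOn B p ∧ ∀ A ∈ B, y ∈ A → A ∈ p}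

lemma aux_fip {Y : Type*} [TopologicalSpace Y] {y : Y} {E : Set Y} (hE : IsOpen E)
    (hyE : y ∈ closure E) {t : Set (Set Y)} (ht : t.Finite) :
    (∀ s ∈ t, IsOpen s ∧ (y ∈ s ∨ Dense s)) → ∀ V : Set Y, IsOpen V → y ∈ V →
      (E ∩ ⋂₀ t ∩ V).Nonempty := by
  refine Set.Finite.induction_on t ht ?_ ?_
  · intro _ V hV hyV
    have := (mem_closure_iff.1 hyE) V hV hyV
    simpa [Set.inter_comm, Set.inter_assoc] using this
  · intro s t hst htfin ih hmem V hV hyV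
    have hs := hmem s (mem_insert _ _)
    have hmem' : ∀ s ∈ t, IsOpen s ∧ (y ∈ s ∨ Dense s) :=
      fun a ha => hmem a (mem_insert_of_mem _ ha)
    rw [sInter_insert]
    rcases hs.2 with hys | hds
    · have := ih hmem' (V ∩ s) (hV.inter hs.1) ⟨hyV, hys⟩
      rcases this with ⟨x, hx⟩
      exact ⟨x, ⟨hx.1.1, hx.2.2, hx.1.2⟩, hx.2.1⟩
    · have hopen : IsOpen (E ∩ ⋂₀ t ∩ V) :=
        (hE.inter (Set.Finite.isOpen_sInter htfin fun a ha => (hmem' a ha).1)).inter hV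
      have hne := ih hmem' V hV hyV
      rcases hds.inter_open_nonempty _ hopen hne with ⟨x, hx, hxs⟩
      exact ⟨x, ⟨hx.1.1, hxs, hx.1.2⟩, hx.2⟩

lemma exists_ultra {Y : Type*} [TopologicalSpace Y] (B : Set (Set Y))
    (hopen : ∀ A ∈ B, IsOpen A) (hdense : ∀ D ∈ B, Dense (D ∪ (closure D)ᶜ))
    (huniv : Set.univ ∈ B) (hinter : ∀ A ∈ B, ∀ A' ∈ B, A ∩ A' ∈ B)
    (hcompl : ∀ A ∈ B, (closure A)ᶜ ∈ B)
    {y : Y} {E : Set Y} (hEB : E ∈ B) (hyE : y ∈ closure E) :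
    ∃ p, (IsUltrafilterOn B p ∧ ∀ A ∈ B, y ∈ A → A ∈ p) ∧ E ∈ p := by
  classical
  set S : Set (Set Y) :=
    insert E ({C | C ∈ B ∧ y ∈ C} ∪ {s | ∃ D ∈ B, s = D ∪ (closure D)ᶜ}) with hS
  have hSprop : ∀ s ∈ S \ {E}, IsOpen s ∧ (y ∈ s ∨ Dense s) := by
    rintro s ⟨hs, hsE⟩
    rcases hs with rfl | hC | ⟨D, hD, rfl⟩
    · exact absurd rfl hsE
    · exact ⟨hopen _ hC.1, Or.inl hC.2⟩
    · exact ⟨(hopen _ hD).union (isClosed_closure.isOpen_compl), Or.inr (hdense _ hD)⟩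
  have hne : NeBot (Filter.generate S) := by
    rw [Filter.generate_neBot_iff]
    intro t hts htfin
    have h1 : E ∩ ⋂₀ (t \ {E}) ⊆ ⋂₀ t := by
      rintro x ⟨hxE, hx⟩ s hst
      by_cases hsE : s = E
      · exact hsE ▸ hxE
      · exact hx s ⟨hst, hsE⟩
    have h2 := aux_fip (hopen _ hEB) hyE (htfin.diff (t := {E}))
      (fun s hs => hSprop s ⟨hts hs.1, hs.2⟩) univ isOpen_univ (mem_univ y)
    rcases h2 with ⟨x, hx, -⟩
    exact ⟨x, h1 hx⟩
  let U : Ultrafilter Y := Ultrafilter.of (Filter.generate S)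
  have hSU : ∀ s ∈ S, s ∈ (U : Filter Y) := fun s hs =>
    Ultrafilter.of_le _ (Filter.mem_generate_of_mem hs)
  refine ⟨{C | C ∈ B ∧ C ∈ (U : Filter Y)}, ⟨⟨fun C hC => hC.1, ⟨huniv, univ_mem⟩,
    fun h => Ultrafilter.empty_notMem (f := U) h.2, ?_, ?_, ?_⟩, ?_⟩, hEB, hSU E (mem_insert _ _)⟩
  · exact fun a ha b hb hab => ⟨hb, mem_of_superset ha.2 hab⟩
  · exact fun a ha b hb => ⟨hinter _ ha.1 _ hb.1, inter_mem ha.2 hb.2⟩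
  · intro C hC
    by_cases hCU : C ∈ (U : Filter Y)
    · exact Or.inl ⟨hC, hCU⟩
    · refine Or.inr ⟨hcompl _ hC, ?_⟩
      have h1 : Cᶜ ∈ (U : Filter Y) := (Ultrafilter.compl_mem_iff_notMem).2 hCU
      have h2 : C ∪ (closure C)ᶜ ∈ (U : Filter Y) :=
        hSU _ (mem_insert_of_mem _ (Or.inr ⟨C, hC, rfl⟩))
      have h3 : Cᶜ ∩ (C ∪ (closure C)ᶜ) ⊆ (closure C)ᶜ := by
        rintro x ⟨hx1, hx2 | hx2⟩
        · exact absurd hx2 hx1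
        · exact hx2
      exact mem_of_superset (inter_mem h1 h2) h3
  · exact fun A hA hyA => ⟨hA, hSU A (mem_insert_of_mem _ (Or.inl ⟨hA, hyA⟩))⟩

theorem stmt18 {Y : Type*} [TopologicalSpace Y] [CompactSpace Y]
    [TopologicalSpace.MetrizableSpace Y]
    (B : Set (Set Y)) (hcount : B.Countable)
    (hreg : ∀ A ∈ B, A = interior (closure A))
    (huniv : Set.univ ∈ B) (hempty : ∅ ∈ B)
    (hinter : ∀ A ∈ B, ∀ A' ∈ B, A ∩ A' ∈ B)
    (hcompl : ∀ A ∈ B, (closure A)ᶜ ∈ B)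
    (hbasis : ∀ y : Y, ∀ U : Set Y, IsOpen U → y ∈ U → ∃ A ∈ B, y ∈ A ∧ A ⊆ U) :
    UniquePreimageSet B = (⋂ A ∈ B, A ∪ (closure A)ᶜ) ∧
    IsGδ (⋂ A ∈ B, A ∪ (closure A)ᶜ) ∧
    Dense (⋂ A ∈ B, A ∪ (closure A)ᶜ) := by
  have hopen : ∀ A ∈ B, IsOpen A := fun A hA => (hreg A hA) ▸ isOpen_interior
  have hdense : ∀ D ∈ B, Dense (D ∪ (closure D)ᶜ) := by
    intro D hD
    rw [dense_iff_inter_open]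
    intro U hU hUne
    by_cases h : (U ∩ (closure D)ᶜ).Nonempty
    · exact h.mono (inter_subset_inter_right _ subset_union_right)
    · have hsub : U ⊆ closure D := by
        intro x hx
        by_contra hxc
        exact h ⟨x, hx, hxc⟩
      have : U ⊆ D := (hreg D hD) ▸ (hU.subset_interior_iff.2 hsub)
      exact hUne.mono fun x hx => ⟨hx, Or.inl (this hx)⟩
  have hAclosed : ∀ A ∈ B, A ∩ (closure A)ᶜ = ∅ := fun A _ =>
    eq_empty_of_forall_notMem fun x hx => hx.2 (subset_closure hx.1)
  refine ⟨?_, IsGδ.biInter_of_isOpen hcount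
      (fun A hA => (hopen A hA).union isClosed_closure.isOpen_compl),
    dense_biInter_of_isOpen
      (fun A hA => (hopen A hA).union isClosed_closure.isOpen_compl) hcount
      (fun A hA => hdense A hA)⟩
  ext y
  simp only [UniquePreimageSet, mem_setOf_eq, mem_iInter, mem_union]
  constructor
  · rintro ⟨p, hp, hpu⟩ A hA
    by_contra hcon
    push_neg at hcon
    obtain ⟨hyA, hyc⟩ := hcon
    -- y ∈ closure A but y ∉ A : build two distinct ultrafilters
    have hyclA : y ∈ closure A := by simpa using hyc
    have hyE2 : y ∈ closure ((closure A)ᶜ) := by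
      rw [closure_compl]
      intro hmem
      exact hyA ((hreg A hA) ▸ hmem)
    obtain ⟨p₁, hp₁, hAp₁⟩ := exists_ultra B hopen hdense huniv hinter hcompl hA hyclA
    obtain ⟨p₂, hp₂, hAp₂⟩ := exists_ultra B hopen hdense huniv hinter hcompl (hcompl A hA) hyE2
    have he : p₁ = p₂ := (hpu p₁ hp₁).trans (hpu p₂ hp₂).symm
    have : A ∩ (closure A)ᶜ ∈ p₂ := hp₂.1.2.2.2.2.1 _ (he ▸ hAp₁) _ hAp₂
    rw [hAclosed A hA] at this
    exact hp₂.1.2.2.1 this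
  · intro hy
    refine ⟨{C | C ∈ B ∧ y ∈ C}, ⟨⟨fun C hC => hC.1, ⟨huniv, mem_univ y⟩,
      fun h => h.2, fun a ha b hb hab => ⟨hb, hab ha.2⟩,
      fun a ha b hb => ⟨hinter _ ha.1 _ hb.1, ha.2, hb.2⟩, ?_⟩,
      fun A hA hyA => ⟨hA, hyA⟩⟩, ?_⟩
    · intro A hA
      rcases hy A hA with h | h
      · exact Or.inl ⟨hA, h⟩
      · exact Or.inr ⟨hcompl A hA, h⟩
    · rintro p' ⟨hp', hall⟩
      ext C
      constructor
      · intro hCp'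
        have hCB : C ∈ B := hp'.1 hCp'
        refine ⟨hCB, ?_⟩
        by_contra hyC
        have hyc : y ∈ (closure C)ᶜ := by
          rcases hy C hCB with h | h
          · exact absurd h hyC
          · exact h
        have h2 : (closure C)ᶜ ∈ p' := hall _ (hcompl C hCB) hyc
        have : C ∩ (closure C)ᶜ ∈ p' := hp'.2.2.2.2.1 _ hCp' _ h2
        rw [hAclosed C hCB] at this
        exact hp'.2.2.1 this
      · intro hC
        exact hall _ hC.1 hC.2
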